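/- Let x ∈ ℝʳ have all coordinates nonzero, with at least two consecutive coordinates of the same sign, and let A be an r×r matrix that is totally positive of order r−1 (all proper minors positive). Then there exists i ∈ [r] such that xᵢ(Ax)ᵢ > 0. -/

import Mathlib

open Matrix
lemma stmt15_alt {n : ℕ} (C : Matrix (Fin (n+1)) (Fin (n+1)) ℝ)
    (hmin : ∀ p : ℕ, p ≤ n+1 → ∀ f g : Fin p → Fin (n+1), StrictMono f → StrictMono g →
      0 < (C.submatrix f g).det)
    (hneg : ∀ u : Fin (n+1), (-1:ℝ)^(u:ℕ) * (C.mulVec (fun v => (-1:ℝ)^(v:ℕ))) u ≤ 0) :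
    False := by
  have hdet : 0 < C.det := by
    have := hmin (n+1) le_rfl id id strictMono_id strictMono_id
    simpa using this
  set ε : Fin (n+1) → ℝ := fun v => (-1:ℝ)^(v:ℕ) with hε
  have key : (C.adjugate).mulVec (C.mulVec ε) = C.det • ε := by
    rw [mulVec_mulVec, adjugate_mul, smul_mulVec, one_mulVec]
  have h0 := congrFun key 0
  have hterm : ∀ u : Fin (n+1), C.adjugate 0 u * (C.mulVec ε) u ≤ 0 := by
    intro u
    rw [adjugate_fin_succ_eq_det_submatrix]
    have hm : 0 < (C.submatrix u.succAbove (0:Fin (n+1)).succAbove).det :=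
      hmin n (by omega) _ _ (Fin.strictMono_succAbove u) (Fin.strictMono_succAbove 0)
    have h1 := hneg u
    have h2 : ((u:ℕ) + ((0:Fin (n+1)):ℕ)) = (u:ℕ) := by simp
    rw [h2]
    have h3 : (-1:ℝ)^(u:ℕ) * (C.submatrix u.succAbove (0:Fin (n+1)).succAbove).det
        * (C.mulVec ε) u
        = (C.submatrix u.succAbove (0:Fin (n+1)).succAbove).det
          * ((-1:ℝ)^(u:ℕ) * (C.mulVec ε) u) := by ring
    rw [h3]
    exact mul_nonpos_of_nonneg_of_nonpos hm.le h1
  have hsum : ∑ u, C.adjugate 0 u * (C.mulVec ε) u ≤ 0 :=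
    Finset.sum_nonpos fun u _ => hterm u
  have h4 : (C.adjugate.mulVec (C.mulVec ε)) 0 = ∑ u, C.adjugate 0 u * (C.mulVec ε) u := rfl
  rw [h4] at h0
  have h5 : ε 0 = 1 := by simp [hε]
  rw [Pi.smul_apply, h5, smul_eq_mul, mul_one] at h0
  linarith [h0 ▸ hsum]

private noncomputable def stmt15Blk {r : ℕ} (x : Fin r → ℝ) : ℕ → ℕ :=
  fun n => Nat.rec 0 (fun n ih => ih +
    (if h : n + 1 < r then (if x ⟨n, Nat.lt_of_succ_lt h⟩ * x ⟨n+1, h⟩ < 0 then 1 else 0)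
     else 0)) n

private lemma stmt15Blk_zero {r : ℕ} (x : Fin r → ℝ) : stmt15Blk x 0 = 0 := rfl

private lemma stmt15Blk_succ {r : ℕ} (x : Fin r → ℝ) (n : ℕ) :
    stmt15Blk x (n+1) = stmt15Blk x n +
      (if h : n + 1 < r then (if x ⟨n, Nat.lt_of_succ_lt h⟩ * x ⟨n+1, h⟩ < 0 then 1 else 0)
       else 0) := rfl

private lemma stmt15Blk_step {r : ℕ} (x : Fin r → ℝ) (n : ℕ) :
    stmt15Blk x n ≤ stmt15Blk x (n+1) ∧ stmt15Blk x (n+1) ≤ stmt15Blk x n + 1 := by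
  rw [stmt15Blk_succ]
  split_ifs <;> omega

private lemma stmt15Blk_mono {r : ℕ} (x : Fin r → ℝ) : Monotone (stmt15Blk x) :=
  monotone_nat_of_le_succ fun n => (stmt15Blk_step x n).1

private lemma stmt15Blk_le_add {r : ℕ} (x : Fin r → ℝ) :
    ∀ m n, n ≤ m → stmt15Blk x m ≤ stmt15Blk x n + (m - n) := by
  intro m
  induction m with
  | zero =>
    intro n h
    have hn : n = 0 := by omega
    subst hn; omega
  | succ m ih =>
    intro n h
    rcases Nat.lt_or_ge n (m+1) with h' | h'
    · have h1 := ih n (by omega)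
      have h2 := (stmt15Blk_step x m).2
      omega
    · have hn : n = m + 1 := by omega
      subst hn; omega

private lemma stmt15Blk_same {r : ℕ} (x : Fin r → ℝ) (n : ℕ) (h : n + 1 < r)
    (hp : 0 < x ⟨n, Nat.lt_of_succ_lt h⟩ * x ⟨n+1, h⟩) :
    stmt15Blk x (n+1) = stmt15Blk x n := by
  rw [stmt15Blk_succ, dif_pos h, if_neg (by linarith), add_zero]

private lemma stmt15Blk_flip {r : ℕ} (x : Fin r → ℝ) (n : ℕ) (h : n + 1 < r)
    (hp : x ⟨n, Nat.lt_of_succ_lt h⟩ * x ⟨n+1, h⟩ < 0) :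
    stmt15Blk x (n+1) = stmt15Blk x n + 1 := by
  rw [stmt15Blk_succ, dif_pos h, if_pos hp]

private lemma stmt15_sign {r : ℕ} (x : Fin r → ℝ) (hr0 : 0 < r) (hx0 : ∀ i, x i ≠ 0) :
    ∀ n (h : n < r), 0 < x ⟨0, hr0⟩ * (-1:ℝ)^(stmt15Blk x n) * x ⟨n, h⟩ := by
  intro n
  induction n with
  | zero =>
    intro h
    have := hx0 ⟨0, hr0⟩
    rw [stmt15Blk_zero, pow_zero, mul_one]
    exact mul_self_pos.mpr this
  | succ n ih =>
    intro h
    have ihn := ih (by omega)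
    have hne : x ⟨n, by omega⟩ * x ⟨n+1, h⟩ ≠ 0 :=
      mul_ne_zero (hx0 _) (hx0 _)
    have hsq : 0 < x ⟨n, by omega⟩ * x ⟨n, by omega⟩ := mul_self_pos.mpr (hx0 _)
    rcases hne.lt_or_gt with hp | hp
    · rw [stmt15Blk_flip x n h hp, pow_succ]
      nlinarith [ihn, hp, hsq]
    · rw [stmt15Blk_same x n h hp]
      nlinarith [ihn, hp, hsq]

private lemma stmt15_ivt (f : ℕ → ℕ) (h0 : f 0 = 0) (hstep : ∀ n, f (n+1) ≤ f n + 1) :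
    ∀ m t, t ≤ f m → ∃ n, n ≤ m ∧ f n = t := by
  intro m
  induction m with
  | zero => intro t ht; exact ⟨0, le_rfl, by omega⟩
  | succ m ih =>
    intro t ht
    by_cases h : t ≤ f m
    · obtain ⟨n, hn, hfn⟩ := ih t h
      exact ⟨n, by omega, hfn⟩
    · exact ⟨m+1, le_rfl, by have := hstep m; omega⟩

private lemma stmt15_det_expand {p r : ℕ} (A : Matrix (Fin r) (Fin r) ℝ)
    (c : Fin r → ℝ) (T : Fin p → Finset (Fin r)) (rw : Fin p → Fin r) :
    (Matrix.of fun t u => ∑ l ∈ T u, c l * A (rw t) l).det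
      = ∑ q ∈ Fintype.piFinset T, (∏ u, c (q u)) * (A.submatrix rw q).det := by
  rw [← Matrix.det_transpose]
  have h1 : (Matrix.of fun t u => ∑ l ∈ T u, c l * A (rw t) l)ᵀ
      = Matrix.of fun u => ∑ l ∈ T u, c l • (fun t => A (rw t) l) := by
    ext u t
    simp [Finset.sum_apply]
  rw [h1]
  have h3 : (Matrix.detRowAlternating :
        AlternatingMap ℝ (Fin p → ℝ) ℝ (Fin p)).toMultilinearMap
      (fun u => ∑ l ∈ T u, (c l • fun t => A (rw t) l))
      = ∑ q ∈ Fintype.piFinset T,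
        (Matrix.detRowAlternating :
          AlternatingMap ℝ (Fin p → ℝ) ℝ (Fin p)).toMultilinearMap
          (fun u => c (q u) • fun t => A (rw t) (q u)) :=
    MultilinearMap.map_sum_finset _ _ T
  refine Eq.trans h3 ?_
  refine Finset.sum_congr rfl fun q hq => ?_
  rw [MultilinearMap.map_smul_univ, smul_eq_mul]
  congr 1
  show ((A.submatrix rw q)ᵀ).det = (A.submatrix rw q).det
  exact Matrix.det_transpose _

/-- If `x ∈ ℝʳ` has all coordinates nonzero with at least two consecutive coordinates of the
same sign, and `A` is `TP_{r-1}` (all minors of size at most `r-1` positive), then `A` does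
not reverse the sign of `x`: there is `i` with `xᵢ (Ax)ᵢ > 0`. -/
theorem stmt15 {r : ℕ} (x : Fin r → ℝ) (hx0 : ∀ i, x i ≠ 0)
    (hsame : ∃ i : ℕ, ∃ h : i + 1 < r, 0 < x ⟨i, by omega⟩ * x ⟨i + 1, h⟩)
    (A : Matrix (Fin r) (Fin r) ℝ)
    (hTP : ∀ p : ℕ, p < r → ∀ (f g : Fin p → Fin r), StrictMono f → StrictMono g →
      0 < (A.submatrix f g).det) :
    ∃ i : Fin r, 0 < x i * (A.mulVec x) i := by
  by_contra hcon
  push_neg at hcon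
  obtain ⟨i0, hi0, hpair⟩ := hsame
  have hr0 : 0 < r := by omega
  set b : ℕ → ℕ := stmt15Blk x with hbdef
  set k : ℕ := b (r-1) with hkdef
  have hkr : k + 1 < r := by
    have h1 : b (i0+1) = b i0 := stmt15Blk_same x i0 hi0 hpair
    have h2 : b i0 ≤ i0 := by
      have := stmt15Blk_le_add x i0 0 (Nat.zero_le _)
      simpa [← hbdef, stmt15Blk_zero] using this
    have h3 : b (r-1) ≤ b (i0+1) + (r-1-(i0+1)) := stmt15Blk_le_add x (r-1) (i0+1) (by omega)
    omega
  have hmono : Monotone b := stmt15Blk_mono x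
  have hblk_le : ∀ l : Fin r, b l ≤ k := fun l => hmono (by have := l.isLt; omega)
  set φ : Fin r → Fin (k+1) := fun l => ⟨b l, by have := hblk_le l; omega⟩ with hφdef
  have hρex : ∀ t : Fin (k+1), ∃ l : Fin r, φ l = t := by
    intro t
    obtain ⟨n, hn, hfn⟩ := stmt15_ivt b (stmt15Blk_zero x) (fun n => (stmt15Blk_step x n).2)
      (r-1) t (by have := t.isLt; omega)
    refine ⟨⟨n, by omega⟩, ?_⟩
    apply Fin.ext
    simpa [hφdef] using hfn
  choose ρ hρ using hρex
  have hρb : ∀ t : Fin (k+1), b (ρ t) = (t:ℕ) := by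
    intro t
    have := congrArg Fin.val (hρ t)
    simpa [hφdef] using this
  have hlt : ∀ a a' : Fin r, b a < b a' → a < a' := by
    intro a a' hba
    by_contra hc
    push_neg at hc
    exact absurd (hmono (show (a':ℕ) ≤ (a:ℕ) from hc)) (by omega)
  set c : Fin r → ℝ := fun l => x ⟨0, hr0⟩ * (-1:ℝ)^(b l) * x l with hcdef
  have hcpos : ∀ l, 0 < c l := by
    intro l
    have := stmt15_sign x hr0 hx0 l l.isLt
    simpa [hcdef] using this
  set S : Fin (k+1) → Finset (Fin r) := fun u => Finset.univ.filter (fun l => φ l = u) with hSdef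
  have hmemS : ∀ (u : Fin (k+1)) (l : Fin r), l ∈ S u ↔ φ l = u := by
    intro u l; simp [hSdef]
  set C : Matrix (Fin (k+1)) (Fin (k+1)) ℝ :=
    Matrix.of (fun t u => ∑ l ∈ S u, c l * A (ρ t) l) with hCdef
  have hminor : ∀ p : ℕ, p ≤ k+1 → ∀ f g : Fin p → Fin (k+1), StrictMono f → StrictMono g →
      0 < (C.submatrix f g).det := by
    intro p hp f g hf hg
    have hsub : C.submatrix f g
        = Matrix.of (fun t u => ∑ l ∈ S (g u), c l * A ((fun t' => ρ (f t')) t) l) := rfl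
    rw [hsub, stmt15_det_expand A c (fun u => S (g u)) (fun t' => ρ (f t'))]
    apply Finset.sum_pos
    · intro q hq
      have hq' : ∀ u, φ (q u) = g u := by
        intro u
        exact (hmemS _ _).mp ((Fintype.mem_piFinset.mp hq) u)
      have hqb : ∀ u, b (q u) = ((g u : Fin (k+1)) : ℕ) := fun u => congrArg Fin.val (hq' u)
      have hqm : StrictMono q := by
        intro u u' huu
        apply hlt
        rw [hqb u, hqb u']
        exact_mod_cast hg huu
      have hfm : StrictMono (fun t' => ρ (f t')) := by
        intro t t' htt
        apply hlt
        rw [hρb, hρb]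
        exact_mod_cast hf htt
      have hdet := hTP p (by omega) _ _ hfm hqm
      have hprod : 0 < ∏ u, c (q u) := Finset.prod_pos fun u _ => hcpos _
      exact mul_pos hprod hdet
    · exact ⟨fun u => ρ (g u), Fintype.mem_piFinset.mpr fun u => (hmemS _ _).mpr (hρ _)⟩
  have hmul : ∀ t : Fin (k+1),
      C.mulVec (fun v : Fin (k+1) => (-1:ℝ)^(v:ℕ)) t = x ⟨0, hr0⟩ * (A.mulVec x) (ρ t) := by
    intro t
    have h1 : C.mulVec (fun v : Fin (k+1) => (-1:ℝ)^(v:ℕ)) t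
        = ∑ u : Fin (k+1), ∑ l ∈ S u, (c l * A (ρ t) l * (-1:ℝ)^(u:ℕ)) := by
      simp only [mulVec, dotProduct, hCdef, Matrix.of_apply, Finset.sum_mul]
    rw [h1]
    have h2 : ∀ u : Fin (k+1), ∀ l ∈ S u,
        c l * A (ρ t) l * (-1:ℝ)^(u:ℕ) = (x ⟨0, hr0⟩ * x l) * A (ρ t) l := by
      intro u l hl
      have hbl : b l = (u:ℕ) := congrArg Fin.val ((hmemS u l).mp hl)
      have hpow : (-1:ℝ)^(b l) * (-1:ℝ)^(u:ℕ) = 1 := by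
        rw [hbl, ← pow_add]
        exact Even.neg_one_pow ⟨(u:ℕ), rfl⟩
      calc c l * A (ρ t) l * (-1)^(u:ℕ)
          = (x ⟨0,hr0⟩ * x l) * ((-1:ℝ)^(b l) * (-1:ℝ)^(u:ℕ)) * A (ρ t) l := by
            simp only [hcdef]; ring
        _ = (x ⟨0,hr0⟩ * x l) * A (ρ t) l := by rw [hpow, mul_one]
    calc ∑ u : Fin (k+1), ∑ l ∈ S u, (c l * A (ρ t) l * (-1:ℝ)^(u:ℕ))
        = ∑ u : Fin (k+1), ∑ l ∈ S u, (x ⟨0,hr0⟩ * x l) * A (ρ t) l :=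
          Finset.sum_congr rfl fun u _ => Finset.sum_congr rfl fun l hl => h2 u l hl
      _ = ∑ l : Fin r, (x ⟨0,hr0⟩ * x l) * A (ρ t) l := by
          simp only [hSdef]
          exact Finset.sum_fiberwise_of_maps_to (fun l _ => Finset.mem_univ (φ l)) _
      _ = x ⟨0,hr0⟩ * (A.mulVec x) (ρ t) := by
          simp only [mulVec, dotProduct, Finset.mul_sum]
          exact Finset.sum_congr rfl fun l _ => by ring
  refine stmt15_alt C hminor ?_
  intro u
  rw [hmul u]
  have h1 : x (ρ u) * (A.mulVec x) (ρ u) ≤ 0 := hcon (ρ u)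
  have h2 : 0 < x ⟨0,hr0⟩ * (-1:ℝ)^(u:ℕ) * x (ρ u) := by
    have := hcpos (ρ u)
    rw [hcdef] at this
    simpa [hρb u] using this
  by_contra hpos
  push_neg at hpos
  have h3 : 0 < ((-1:ℝ)^(u:ℕ) * (x ⟨0,hr0⟩ * (A.mulVec x) (ρ u)))
      * (x ⟨0,hr0⟩ * (-1:ℝ)^(u:ℕ) * x (ρ u)) := mul_pos hpos h2
  nlinarith [h1, h3, sq_nonneg ((-1:ℝ)^(u:ℕ) * x ⟨0,hr0⟩)]
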